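/- Let Q_n ∈ ℂ[X] be defined recursively together with P_n by P₁(x) = x, Q₁(x) = 0, P_{n+1}(x) = x·P_n(x) + x·Q_n(x), Q_{n+1}(x) = P_n(x) + x·Q_n(x). Then for every N ≥ 1, Q_{2N}(x) = Σ_{ℓ=0}^{N−1} C(2N−1, 2ℓ) x^{N+ℓ} as polynomials in ℂ[X]. -/

import Mathlib

open Polynomial

theorem Q_even_closed_form
    (P Q : ℕ → Polynomial ℂ)
    (hP1 : P 1 = X) (hQ1 : Q 1 = 0)
    (hP : ∀ n, 1 ≤ n → P (n + 1) = X * P n + X * Q n)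
    (hQ : ∀ n, 1 ≤ n → Q (n + 1) = P n + X * Q n)
    (N : ℕ) (hN : 1 ≤ N) :
    Q (2 * N) = ∑ ℓ ∈ Finset.range N,
      (Nat.choose (2 * N - 1) (2 * ℓ) : Polynomial ℂ) * X ^ (N + ℓ) := by
  have key : ∀ n : ℕ,
      P (n + 1) = ∑ j ∈ Finset.range (n + 1),
        (Nat.choose n (2 * j) : Polynomial ℂ) * X ^ (n + 1 - j) ∧
      Q (n + 1) = ∑ j ∈ Finset.range (n + 1),
        (Nat.choose n (2 * j + 1) : Polynomial ℂ) * X ^ (n - j) := by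
    intro n
    induction n with
    | zero => simp [hP1, hQ1]
    | succ n ih =>
      obtain ⟨ihP, ihQ⟩ := ih
      constructor
      · rw [hP (n + 1) (by omega), ihP, ihQ, Finset.mul_sum, Finset.mul_sum]
        rw [Finset.sum_range_succ' (fun j =>
          (Nat.choose (n + 1) (2 * j) : Polynomial ℂ) * X ^ (n + 2 - j))]
        rw [Finset.sum_range_succ' (fun j =>
          X * ((Nat.choose n (2 * j) : Polynomial ℂ) * X ^ (n + 1 - j)))]
        have h1 : ∀ i ∈ Finset.range (n + 1),
            (Nat.choose (n + 1) (2 * (i + 1)) : Polynomial ℂ) * X ^ (n + 2 - (i + 1))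
            = X * ((Nat.choose n (2 * i + 1) : Polynomial ℂ) * X ^ (n + 1 - (i + 1)))
              + (Nat.choose n (2 * i + 2) : Polynomial ℂ) * X ^ (n + 1 - i) := by
          intro i hi
          simp only [Finset.mem_range] at hi
          have hc : (n + 1).choose (2 * (i + 1)) =
              n.choose (2 * i + 1) + n.choose (2 * i + 2) := by
            have : 2 * (i + 1) = (2 * i + 1) + 1 := by ring
            rw [this, Nat.choose_succ_succ]
          rw [hc]
          push_cast
          rw [show n + 1 - i = (n - i) + 1 from by omega]
          ring
        rw [Finset.sum_congr rfl h1]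
        rw [Finset.sum_add_distrib]
        have h2 : ∑ i ∈ Finset.range (n + 1),
            (Nat.choose n (2 * i + 2) : Polynomial ℂ) * X ^ (n + 1 - i)
            = ∑ i ∈ Finset.range n,
            X * ((Nat.choose n (2 * (i + 1)) : Polynomial ℂ) * X ^ (n + 1 - (i + 1))) := by
          rw [Finset.sum_range_succ]
          have hz0 : n.choose (2 * n + 2) = 0 := Nat.choose_eq_zero_of_lt (by omega)
          rw [hz0]
          push_cast
          rw [zero_mul, add_zero]
          apply Finset.sum_congr rfl
          intro i hi
          simp only [Finset.mem_range] at hi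
          rw [show n + 1 - i = (n - i) + 1 from by omega]
          ring
        rw [h2]
        simp only [Nat.choose_zero_right, Nat.cast_one, one_mul, mul_zero, Nat.sub_zero,
          Nat.add_sub_add_right]
        ring
      · rw [hQ (n + 1) (by omega), ihP, ihQ, Finset.mul_sum]
        rw [Finset.sum_range_succ (fun j =>
          (Nat.choose (n + 1) (2 * j + 1) : Polynomial ℂ) * X ^ (n + 1 - j))]
        have hz : (n + 1).choose (2 * (n + 1) + 1) = 0 :=
          Nat.choose_eq_zero_of_lt (by omega)
        rw [hz]
        push_cast
        rw [zero_mul, add_zero, ← Finset.sum_add_distrib]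
        apply Finset.sum_congr rfl
        intro j hj
        simp only [Finset.mem_range] at hj
        have hc : (n + 1).choose (2 * j + 1) = n.choose (2 * j) + n.choose (2 * j + 1) :=
          Nat.choose_succ_succ n (2 * j)
        rw [hc]
        push_cast
        rw [show n + 1 - j = (n - j) + 1 from by omega]
        ring
  have h2N : 2 * N = (2 * N - 1) + 1 := by omega
  have hQ2N := (key (2 * N - 1)).2
  rw [← h2N] at hQ2N
  rw [hQ2N]
  have hsplit : ∑ j ∈ Finset.range (2 * N), (Nat.choose (2 * N - 1) (2 * j + 1) : Polynomial ℂ)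
      * X ^ (2 * N - 1 - j)
      = ∑ j ∈ Finset.range N, (Nat.choose (2 * N - 1) (2 * j + 1) : Polynomial ℂ)
      * X ^ (2 * N - 1 - j) := by
    symm
    apply Finset.sum_subset
    · apply Finset.range_subset_range.mpr; omega
    · intro j _ hj
      simp only [Finset.mem_range, not_lt] at hj
      have : (2 * N - 1).choose (2 * j + 1) = 0 := Nat.choose_eq_zero_of_lt (by omega)
      rw [this]; push_cast; ring
  rw [hsplit]
  rw [← Finset.sum_range_reflect]
  apply Finset.sum_congr rfl
  intro ℓ hℓ
  simp only [Finset.mem_range] at hℓ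
  have e1 : 2 * (N - 1 - ℓ) + 1 = 2 * N - 1 - 2 * ℓ := by omega
  have e2 : 2 * N - 1 - (N - 1 - ℓ) = N + ℓ := by omega
  have e3 : (2 * N - 1).choose (2 * N - 1 - 2 * ℓ) = (2 * N - 1).choose (2 * ℓ) :=
    Nat.choose_symm (by omega)
  rw [e1, e2, e3]
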